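/- Let n ≥ 1 and let a₁,…,aₙ : ℝ → ℝ be continuous such that for all t the monic polynomial P(t)(x) = xⁿ - a₁(t)xⁿ⁻¹ + ⋯ + (-1)ⁿaₙ(t) has all roots real. Let I be an open interval, t₀ ∈ I, and suppose: y = (y₁,…,yₙ) is a twice differentiable parametrization of the roots of P on I ∩ (-∞, t₀), and x = (x₁,…,xₙ) is a twice differentiable parametrization of the roots of P on a neighborhood of t₀. Then there exist a permutation π of {1,…,n} and a sequence tₘ ↗ t₀ in I such that y_{π(i)}(tₘ) = x_i(tₘ), y_{π(i)}'(tₘ) = x_i'(tₘ), and y_{π(i)}''(tₘ) = x_i''(tₘ) for all i and all m; consequently the map equal to (y_{π(i)})_i for t < t₀ and to x for t ≥ t₀ is a twice differentiable parametrization of the roots of P on an interval containing I ∩ (-∞, t₀] in its interior. -/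

import Mathlib

open Polynomial

/-- The monic polynomial curve `P(t)(x) = xⁿ - a₁(t)xⁿ⁻¹ + a₂(t)xⁿ⁻² - ⋯ + (-1)ⁿ aₙ(t)`. -/
noncomputable def curvePoly (n : ℕ) (a : ℕ → ℝ → ℝ) (t : ℝ) : Polynomial ℝ :=
  X ^ n + ∑ k ∈ Finset.Icc 1 n, C ((-1 : ℝ) ^ k * a k t) * X ^ (n - k)

/-- `x : T → ℝⁿ` parametrizes the roots of `P` on `T`: for each `t ∈ T` the multiset
`{x₁(t),…,xₙ(t)}` equals the multiset of roots of `P(t)` with multiplicity. -/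
def IsRootParamOn (n : ℕ) (a : ℕ → ℝ → ℝ) (T : Set ℝ) (x : Fin n → ℝ → ℝ) : Prop :=
  ∀ t ∈ T, (curvePoly n a t).roots = Multiset.map (fun i => x i t) (Finset.univ : Finset (Fin n)).val

section Aux
open Filter Topology Set

lemma exists_perm_of_map_eq {n : ℕ} (f g : Fin n → ℝ)
    (h : Multiset.map f Finset.univ.val = Multiset.map g Finset.univ.val) :
    ∃ σ : Equiv.Perm (Fin n), ∀ i, f (σ i) = g i := by
  have hof : ∀ (u : Fin n → ℝ), Multiset.map u Finset.univ.val = ↑(List.ofFn u) := by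
    intro u
    rw [List.ofFn_eq_map]
    rfl
  have hperm : (List.ofFn f).Perm (List.ofFn g) := by
    rw [← Multiset.coe_eq_coe, ← hof, ← hof, h]
  have hsf := Tuple.monotone_sort f
  have hsg := Tuple.monotone_sort g
  have heq : f ∘ Tuple.sort f = g ∘ Tuple.sort g := by
    apply List.ofFn_injective
    exact List.Perm.eq_of_sortedLE
      (List.sortedLE_ofFn_iff.2 hsf) (List.sortedLE_ofFn_iff.2 hsg)
      (((Tuple.sort f).ofFn_comp_perm f).trans
        (hperm.trans ((Tuple.sort g).ofFn_comp_perm g).symm))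
  refine ⟨(Tuple.sort g).symm.trans (Tuple.sort f), fun i => ?_⟩
  have := congrFun heq ((Tuple.sort g).symm i)
  simpa using this

lemma countable_isolated (s : Set ℝ) :
    {t ∈ s | ¬ (𝓝[s \ {t}] t).NeBot}.Countable := by
  set D := {t ∈ s | ¬ (𝓝[s \ {t}] t).NeBot} with hD
  have hf : ∀ t ∈ D, ({t} : Set ℝ) ∈ 𝓝[D] t := by
    intro t ht
    obtain ⟨hts, hiso⟩ := ht
    have hbot : 𝓝[s \ {t}] t = ⊥ := not_neBot.1 hiso
    have h1 : 𝓝[s] t ≤ 𝓝[(s \ {t}) ∪ {t}] t := nhdsWithin_mono _ (by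
      intro u hu
      by_cases hu' : u = t
      · exact Or.inr hu'
      · exact Or.inl ⟨hu, hu'⟩)
    rw [nhdsWithin_union, hbot, bot_sup_eq] at h1
    have h2 : ({t} : Set ℝ) ∈ 𝓝[({t} : Set ℝ)] t := self_mem_nhdsWithin
    have h3 : ({t} : Set ℝ) ∈ 𝓝[s] t := h1 h2
    exact nhdsWithin_mono _ (fun u hu => hu.1) h3
  obtain ⟨T, hTD, hTc, hcov⟩ := TopologicalSpace.countable_cover_nhdsWithin hf
  apply hTc.mono
  intro t ht
  have := hcov ht
  simp only [mem_iUnion, mem_singleton_iff] at this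
  obtain ⟨u, hu, rfl⟩ := this
  exact hu

lemma deriv_eq_zero_of_acc {f : ℝ → ℝ} {s : Set ℝ} {t : ℝ}
    (hf : DifferentiableAt ℝ f t) (hz : ∀ u ∈ s, f u = 0) (hts : t ∈ s)
    (hacc : (𝓝[s \ {t}] t).NeBot) : deriv f t = 0 := by
  have h1 : Tendsto (slope f t) (𝓝[≠] t) (𝓝 (deriv f t)) :=
    hasDerivAt_iff_tendsto_slope.1 hf.hasDerivAt
  have h2 : Tendsto (slope f t) (𝓝[s \ {t}] t) (𝓝 (deriv f t)) :=
    h1.mono_left (nhdsWithin_mono _ (fun u hu => hu.2))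
  have h3 : Tendsto (slope f t) (𝓝[s \ {t}] t) (𝓝 0) := by
    apply Tendsto.congr' _ tendsto_const_nhds
    filter_upwards [self_mem_nhdsWithin] with u hu
    rw [slope_def_field, hz u hu.1, hz t hts]
    simp
  exact tendsto_nhds_unique h2 h3

lemma branch_tendsto_zero {ι : Type*} [Finite ι] {t₀ α : ℝ} (hα : α < t₀)
    {φ : ℝ → ℝ} {h : ι → ℝ → ℝ}
    (hφc : ContinuousOn φ (Set.Ioo α t₀))
    (hmem : ∀ t ∈ Set.Ioo α t₀, ∃ j, φ t = h j t)
    (hlim : ∀ j, Tendsto (fun t => |h j t|) (𝓝[<] t₀) atTop ∨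
      ∃ L, Tendsto (h j) (𝓝[<] t₀) (𝓝 L))
    (hz : ∃ᶠ t in 𝓝[<] t₀, φ t = 0) :
    Tendsto φ (𝓝[<] t₀) (𝓝 0) := by
  classical
  rw [NormedAddCommGroup.tendsto_nhds_zero]
  intro ε hε
  -- choose ε' ∈ (0, ε) avoiding the finitely many |L j|
  have hfin : ({r : ℝ | ∃ j L, Tendsto (h j) (𝓝[<] t₀) (𝓝 L) ∧ r = |L|}).Finite := by
    have : {r : ℝ | ∃ j L, Tendsto (h j) (𝓝[<] t₀) (𝓝 L) ∧ r = |L|} ⊆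
        (Set.range fun j : ι => if hj : ∃ L, Tendsto (h j) (𝓝[<] t₀) (𝓝 L) then |hj.choose| else 0) := by
      rintro r ⟨j, L, hL, rfl⟩
      refine ⟨j, ?_⟩
      have hj : ∃ L, Tendsto (h j) (𝓝[<] t₀) (𝓝 L) := ⟨L, hL⟩
      simp only [dif_pos hj]
      have : hj.choose = L := tendsto_nhds_unique hj.choose_spec hL
      rw [this]
    exact (Set.finite_range _).subset this
  obtain ⟨ε', hε'mem, hε'⟩ :
      ∃ ε' ∈ Set.Ioo (0:ℝ) ε, ε' ∉ {r : ℝ | ∃ j L, Tendsto (h j) (𝓝[<] t₀) (𝓝 L) ∧ r = |L|} := by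
    have hinf : (Set.Ioo (0:ℝ) ε).Infinite := Set.Ioo_infinite hε
    obtain ⟨ε', hε'⟩ := (hinf.diff hfin).nonempty
    exact ⟨ε', hε'.1, hε'.2⟩
  obtain ⟨hε'pos, hε'lt⟩ := hε'mem
  -- eventually all branches avoid |·| = ε'
  have hev : ∀ᶠ t in 𝓝[<] t₀, ∀ j, |h j t| ≠ ε' := by
    rw [eventually_all]
    intro j
    rcases hlim j with hj | ⟨L, hL⟩
    · filter_upwards [hj.eventually_gt_atTop ε'] with t ht using ne_of_gt ht
    · have hLne : |L| ≠ ε' := fun hc => hε' ⟨j, L, hL, hc.symm⟩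
      have : Tendsto (fun t => |h j t|) (𝓝[<] t₀) (𝓝 |L|) := hL.abs
      exact this.eventually_ne hLne
  have hIoo : ∀ᶠ t in 𝓝[<] t₀, t ∈ Set.Ioo α t₀ := Ioo_mem_nhdsLT hα
  obtain ⟨δ, hδ, hδsub⟩ := mem_nhdsLT_iff_exists_Ioo_subset.1
    ((hev.and hIoo) : {t | (∀ j, |h j t| ≠ ε') ∧ t ∈ Set.Ioo α t₀} ∈ 𝓝[<] t₀)
  have hclaim : ∀ t ∈ Set.Ioo δ t₀, |φ t| < ε' := by
    intro t ht
    by_contra hcon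
    push_neg at hcon
    obtain ⟨z, hz0, hzmem⟩ : ∃ z, φ z = 0 ∧ z ∈ Set.Ioo δ t₀ :=
      (hz.and_eventually (Ioo_mem_nhdsLT hδ)).exists
    have huIcc : Set.uIcc t z ⊆ Set.Ioo δ t₀ :=
      (Set.ordConnected_Ioo).uIcc_subset ht hzmem
    have hcont : ContinuousOn (fun u => |φ u|) (Set.uIcc t z) :=
      (hφc.mono (fun u hu => (hδsub (huIcc hu)).2)).abs
    have hmemε : ε' ∈ Set.uIcc (|φ t|) (|φ z|) := by
      rw [hz0, abs_zero]
      exact Set.mem_uIcc.2 (Or.inr ⟨le_of_lt hε'pos, hcon⟩)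
    obtain ⟨s, hsmem, hs⟩ := intermediate_value_uIcc hcont hmemε
    have hsIoo := huIcc hsmem
    obtain ⟨j, hj⟩ := hmem s (hδsub hsIoo).2
    exact (hδsub hsIoo).1 j (by rw [← hj]; exact hs)
  filter_upwards [Ioo_mem_nhdsLT hδ] with t ht
  calc ‖φ t‖ = |φ t| := rfl
  _ < ε' := hclaim t ht
  _ < ε := hε'lt

lemma exists_deriv_eq_aux {n : ℕ} (u v : Fin n → ℝ → ℝ) (tb : ℝ)
    (heq : ∀ᶠ s in 𝓝 tb, Multiset.map (fun j => u j s) Finset.univ.val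
      = Multiset.map (fun j => v j s) Finset.univ.val)
    (hu : ∀ j, DifferentiableAt ℝ (u j) tb) (hv : ∀ j, DifferentiableAt ℝ (v j) tb)
    (i : Fin n) :
    ∃ j, v j tb = u i tb ∧ deriv (v j) tb = deriv (u i) tb := by
  classical
  set vv := u i tb with hvv
  set w := deriv (u i) tb with hw
  set Mu : Finset (Fin n) := Finset.univ.filter (fun j => vv = u j tb) with hMu
  set Mv : Finset (Fin n) := Finset.univ.filter (fun j => vv = v j tb) with hMv
  -- cardinalities agree
  have hcard : Mu.card = Mv.card := by
    have h0 := heq.self_of_nhds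
    have h1 := congrArg (Multiset.count vv) h0
    rw [Multiset.count_map, Multiset.count_map] at h1
    exact h1
  -- the two auxiliary functions
  set Lfun : ℝ → ℝ := fun s => (∏ j ∈ Mu, (w - slope (u j) tb s)) *
      ∏ j ∈ Muᶜ, (vv + (s - tb) * w - u j s) with hLfun
  set Rfun : ℝ → ℝ := fun s => (∏ j ∈ Mv, (w - slope (v j) tb s)) *
      ∏ j ∈ Mvᶜ, (vv + (s - tb) * w - v j s) with hRfun
  -- key factorization
  have key : ∀ (f : Fin n → ℝ → ℝ) (M : Finset (Fin n)), (∀ j ∈ M, f j tb = vv) →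
      ∀ s, s ≠ tb → (∏ j, (vv + (s - tb) * w - f j s)) =
        (s - tb) ^ M.card * ((∏ j ∈ M, (w - slope (f j) tb s)) *
          ∏ j ∈ Mᶜ, (vv + (s - tb) * w - f j s)) := by
    intro f M hM s hs
    have hsne : s - tb ≠ 0 := sub_ne_zero.2 hs
    rw [← Finset.prod_mul_prod_compl M (fun j => (vv + (s - tb) * w - f j s))]
    have h2 : ∀ j ∈ M, vv + (s - tb) * w - f j s = (s - tb) * (w - slope (f j) tb s) := by
      intro j hj
      rw [slope_def_field, hM j hj]
      field_simp
      ring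
    rw [Finset.prod_congr rfl h2, Finset.prod_mul_distrib, Finset.prod_const]
    ring
  -- eventual equality of Lfun and Rfun on the punctured neighborhood
  have heqfun : ∀ᶠ s in 𝓝[≠] tb, Lfun s = Rfun s := by
    filter_upwards [eventually_nhdsWithin_of_eventually_nhds heq, self_mem_nhdsWithin]
      with s hs hsne
    have hprod : (∏ j, (vv + (s - tb) * w - u j s)) = ∏ j, (vv + (s - tb) * w - v j s) := by
      have h3 := congrArg (fun m : Multiset ℝ =>
        (m.map (fun r => vv + (s - tb) * w - r)).prod) hs
      simpa [Multiset.map_map, Function.comp_def, Finset.prod_eq_multiset_prod] using h3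
    have hMup : ∀ j ∈ Mu, u j tb = vv := fun j hj => ((Finset.mem_filter.1 hj).2).symm
    have hMvp : ∀ j ∈ Mv, v j tb = vv := fun j hj => ((Finset.mem_filter.1 hj).2).symm
    rw [key u Mu hMup s hsne, key v Mv hMvp s hsne, hcard] at hprod
    exact mul_left_cancel₀ (pow_ne_zero _ (sub_ne_zero.2 hsne)) hprod
  -- limits
  have hslope : ∀ (f : ℝ → ℝ), DifferentiableAt ℝ f tb →
      Tendsto (fun s => w - slope f tb s) (𝓝[≠] tb) (𝓝 (w - deriv f tb)) :=
    fun f hf => tendsto_const_nhds.sub (hasDerivAt_iff_tendsto_slope.1 hf.hasDerivAt)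
  have hother : ∀ (f : ℝ → ℝ), DifferentiableAt ℝ f tb →
      Tendsto (fun s => vv + (s - tb) * w - f s) (𝓝[≠] tb) (𝓝 (vv - f tb)) := by
    intro f hf
    have h4 : Tendsto (fun s => vv + (s - tb) * w - f s) (𝓝 tb) (𝓝 (vv + (tb - tb) * w - f tb)) := by
      exact ((tendsto_const_nhds.add ((tendsto_id.sub tendsto_const_nhds).mul
        tendsto_const_nhds)).sub hf.continuousAt)
    simpa using h4.mono_left nhdsWithin_le_nhds
  have hL : Tendsto Lfun (𝓝[≠] tb)
      (𝓝 ((∏ j ∈ Mu, (w - deriv (u j) tb)) * ∏ j ∈ Muᶜ, (vv - u j tb))) :=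
    (tendsto_finset_prod _ fun j _ => hslope (u j) (hu j)).mul
      (tendsto_finset_prod _ fun j _ => hother (u j) (hu j))
  have hR : Tendsto Rfun (𝓝[≠] tb)
      (𝓝 ((∏ j ∈ Mv, (w - deriv (v j) tb)) * ∏ j ∈ Mvᶜ, (vv - v j tb))) :=
    (tendsto_finset_prod _ fun j _ => hslope (v j) (hv j)).mul
      (tendsto_finset_prod _ fun j _ => hother (v j) (hv j))
  have hA : (∏ j ∈ Mu, (w - deriv (u j) tb)) * ∏ j ∈ Muᶜ, (vv - u j tb) = 0 := by
    have hiMu : i ∈ Mu := Finset.mem_filter.2 ⟨Finset.mem_univ _, rfl⟩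
    rw [Finset.prod_eq_zero hiMu (by rw [← hw]; ring), zero_mul]
  have huniq := tendsto_nhds_unique ((hL.congr' heqfun)) hR
  rw [hA] at huniq
  have hne : (∏ j ∈ Mvᶜ, (vv - v j tb)) ≠ 0 := by
    rw [Finset.prod_ne_zero_iff]
    intro j hj
    have : v j tb ≠ vv := by
      intro hc
      exact (Finset.mem_compl.1 hj) (Finset.mem_filter.2 ⟨Finset.mem_univ _, hc.symm⟩)
    exact sub_ne_zero.2 (Ne.symm this)
  have hzero : (∏ j ∈ Mv, (w - deriv (v j) tb)) = 0 := by
    rcases mul_eq_zero.1 huniq.symm with h | h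
    · exact h
    · exact absurd h hne
  obtain ⟨j, hjMv, hj0⟩ := Finset.prod_eq_zero_iff.1 hzero
  exact ⟨j, ((Finset.mem_filter.1 hjMv).2).symm, (sub_eq_zero.1 hj0).symm⟩


lemma map_perm_univ {n : ℕ} (σ : Equiv.Perm (Fin n)) (f : Fin n → ℝ) :
    Multiset.map (fun i => f (σ i)) Finset.univ.val = Multiset.map f Finset.univ.val := by
  have h1 : Multiset.map (⇑σ) Finset.univ.val = Finset.univ.val := by
    calc Multiset.map (⇑σ) Finset.univ.val = (Finset.univ.map σ.toEmbedding).val := by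
          rw [Finset.map_val]; rfl
    _ = Finset.univ.val := by rw [Finset.map_univ_equiv]
  calc Multiset.map (fun i => f (σ i)) Finset.univ.val
      = Multiset.map f (Multiset.map (⇑σ) Finset.univ.val) := (Multiset.map_map f (⇑σ) _).symm
  _ = Multiset.map f Finset.univ.val := by rw [h1]

lemma not_countable_Ioo {a b : ℝ} (h : a < b) : ¬ (Set.Ioo a b).Countable := by
  intro hc
  have h2 := hc.measure_zero (μ := MeasureTheory.volume)
  rw [Real.volume_Ioo] at h2
  simp [ENNReal.ofReal_eq_zero, sub_nonpos, not_le.2 h] at h2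

end Aux

open Filter Topology in
theorem pasting_twice_differentiable_parametrizations
    (n : ℕ) (hn : 1 ≤ n) (a : ℕ → ℝ → ℝ)
    (hcont : ∀ k ∈ Finset.Icc 1 n, Continuous (a k))
    (hreal : ∀ t : ℝ, ((curvePoly n a t).roots).card = n)
    (I : Set ℝ) (hIopen : IsOpen I) (hIconn : I.OrdConnected) (t₀ : ℝ) (ht₀ : t₀ ∈ I)
    (y : Fin n → ℝ → ℝ)
    (hy : IsRootParamOn n a (I ∩ Set.Iio t₀) y)
    (hydiff : ∀ i, ∀ t ∈ I ∩ Set.Iio t₀, DifferentiableAt ℝ (y i) t)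
    (hydiff2 : ∀ i, ∀ t ∈ I ∩ Set.Iio t₀, DifferentiableAt ℝ (deriv (y i)) t)
    (V : Set ℝ) (hVopen : IsOpen V) (ht₀V : t₀ ∈ V)
    (x : Fin n → ℝ → ℝ)
    (hx : IsRootParamOn n a V x)
    (hxdiff : ∀ i, ∀ t ∈ V, DifferentiableAt ℝ (x i) t)
    (hxdiff2 : ∀ i, ∀ t ∈ V, DifferentiableAt ℝ (deriv (x i)) t) :
    ∃ π : Equiv.Perm (Fin n), ∃ tm : ℕ → ℝ,
      (∀ m, tm m ∈ I ∩ Set.Iio t₀) ∧ StrictMono tm ∧ Tendsto tm atTop (𝓝 t₀) ∧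
      (∀ i : Fin n, ∀ m : ℕ,
        y (π i) (tm m) = x i (tm m) ∧
        deriv (y (π i)) (tm m) = deriv (x i) (tm m) ∧
        deriv (deriv (y (π i))) (tm m) = deriv (deriv (x i)) (tm m)) ∧
      ∃ J : Set ℝ, IsOpen J ∧ J.OrdConnected ∧ I ∩ Set.Iic t₀ ⊆ J ∧
        IsRootParamOn n a J (fun i t => if t < t₀ then y (π i) t else x i t) ∧
        (∀ i, ∀ t ∈ J,
          DifferentiableAt ℝ (fun s => if s < t₀ then y (π i) s else x i s) t) ∧
        (∀ i, ∀ t ∈ J,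
          DifferentiableAt ℝ (deriv (fun s => if s < t₀ then y (π i) s else x i s)) t) := by
  classical
  obtain ⟨r, hr, hball⟩ : ∃ r > 0, Set.Ioo (t₀ - r) (t₀ + r) ⊆ I ∩ V := by
    obtain ⟨r, hr, hball⟩ := Metric.isOpen_iff.1 (hIopen.inter hVopen) t₀ ⟨ht₀, ht₀V⟩
    exact ⟨r, hr, by rwa [Real.ball_eq_Ioo] at hball⟩
  set α : ℝ := t₀ - r with hαdef
  have hαlt : α < t₀ := by simp only [hαdef]; linarith
  set W : Set ℝ := Set.Ioo α t₀ with hWdef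
  have hWsub : ∀ t ∈ W, t ∈ I ∧ t ∈ V ∧ t < t₀ := by
    intro t ht
    have h1 : t ∈ I ∩ V := hball ⟨ht.1, by linarith [ht.2]⟩
    exact ⟨h1.1, h1.2, ht.2⟩
  have hWI : ∀ t ∈ W, t ∈ I ∩ Set.Iio t₀ := fun t ht => ⟨(hWsub t ht).1, (hWsub t ht).2.2⟩
  have hWV : ∀ t ∈ W, t ∈ V := fun t ht => (hWsub t ht).2.1
  have hWopen : IsOpen W := isOpen_Ioo
  have hroots : ∀ t ∈ W, Multiset.map (fun j => y j t) Finset.univ.val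
      = Multiset.map (fun j => x j t) Finset.univ.val := fun t ht =>
    (hy t (hWI t ht)).symm.trans (hx t (hWV t ht))
  -- the matching sets and their double derived sets
  set E : Equiv.Perm (Fin n) → Set ℝ := fun σ => {t ∈ W | ∀ i, y (σ i) t = x i t} with hE
  set A : Equiv.Perm (Fin n) → Set ℝ := fun σ => {t ∈ E σ | (𝓝[E σ \ {t}] t).NeBot} with hA
  set B : Equiv.Perm (Fin n) → Set ℝ := fun σ => {t ∈ A σ | (𝓝[A σ \ {t}] t).NeBot} with hB
  have hcover : ∀ t ∈ W, ∃ σ, t ∈ E σ := by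
    intro t ht
    obtain ⟨σ, hσ⟩ := exists_perm_of_map_eq _ _ (hroots t ht)
    exact ⟨σ, ht, hσ⟩
  have hEA : ∀ σ, (E σ \ A σ).Countable := by
    intro σ
    apply (countable_isolated (E σ)).mono
    intro t ht
    exact ⟨ht.1, fun hc => ht.2 ⟨ht.1, hc⟩⟩
  have hAB : ∀ σ, (A σ \ B σ).Countable := by
    intro σ
    apply (countable_isolated (A σ)).mono
    intro t ht
    exact ⟨ht.1, fun hc => ht.2 ⟨ht.1, hc⟩⟩
  -- some B σ clusters at t₀ from the left
  obtain ⟨σ, hBσ⟩ : ∃ σ, ∃ᶠ t in 𝓝[<] t₀, t ∈ B σ := by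
    by_contra hcon
    push_neg at hcon
    have hev : ∀ᶠ t in 𝓝[<] t₀, ∀ σ : Equiv.Perm (Fin n), t ∉ B σ := by
      rw [Filter.eventually_all]
      intro σ
      exact hcon σ
    obtain ⟨δ, hδ, hδsub⟩ := mem_nhdsLT_iff_exists_Ioo_subset.1
      ((hev.and (Ioo_mem_nhdsLT hαlt)) :
        {t | (∀ σ : Equiv.Perm (Fin n), t ∉ B σ) ∧ t ∈ Set.Ioo α t₀} ∈ 𝓝[<] t₀)
    set δ' : ℝ := max δ α with hδ'def
    have hδ't₀ : δ' < t₀ := max_lt hδ hαlt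
    have hsub2 : Set.Ioo δ' t₀ ⊆ ⋃ σ : Equiv.Perm (Fin n), ((E σ \ A σ) ∪ (A σ \ B σ)) := by
      intro t ht
      have htδ : t ∈ Set.Ioo δ t₀ := ⟨lt_of_le_of_lt (le_max_left δ α) ht.1, ht.2⟩
      obtain ⟨hnotB, htW⟩ := hδsub htδ
      obtain ⟨σ, hσ⟩ := hcover t htW
      rw [Set.mem_iUnion]
      by_cases hA' : t ∈ A σ
      · exact ⟨σ, Or.inr ⟨hA', hnotB σ⟩⟩
      · exact ⟨σ, Or.inl ⟨hσ, hA'⟩⟩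
    exact not_countable_Ioo hδ't₀
      ((Set.countable_iUnion (fun σ => (hEA σ).union (hAB σ))).mono hsub2)
  have hBA : ∀ t ∈ B σ, t ∈ A σ := fun t ht => ht.1
  have hAE : ∀ t ∈ A σ, t ∈ E σ := fun t ht => ht.1
  have hEW : ∀ t ∈ E σ, t ∈ W := fun t ht => ht.1
  -- derivative matching on A σ
  have hmatch1 : ∀ t ∈ A σ, ∀ i, deriv (y (σ i)) t = deriv (x i) t := by
    intro t ht i
    have htW : t ∈ W := hEW t (hAE t ht)
    have hdy := hydiff (σ i) t (hWI t htW)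
    have hdx := hxdiff i t (hWV t htW)
    have h0 := deriv_eq_zero_of_acc (f := fun s => y (σ i) s - x i s) (s := E σ)
      (hdy.sub hdx) (fun u hu => sub_eq_zero.2 (hu.2 i)) (hAE t ht) ht.2
    rw [deriv_fun_sub hdy hdx] at h0
    exact sub_eq_zero.1 h0
  have hmatch2 : ∀ t ∈ B σ, ∀ i, deriv (deriv (y (σ i))) t = deriv (deriv (x i)) t := by
    intro t ht i
    have htW : t ∈ W := hEW t (hAE t (hBA t ht))
    have hdy := hydiff2 (σ i) t (hWI t htW)
    have hdx := hxdiff2 i t (hWV t htW)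
    have h0 := deriv_eq_zero_of_acc (f := fun s => deriv (y (σ i)) s - deriv (x i) s)
      (s := A σ) (hdy.sub hdx) (fun u hu => sub_eq_zero.2 (hmatch1 u hu i))
      (hBA t ht) ht.2
    rw [deriv_fun_sub hdy hdx] at h0
    exact sub_eq_zero.1 h0
  -- build the strictly monotone sequence
  have hpick : ∀ d : ℝ, d < t₀ → ∃ s, s ∈ B σ ∧ d < s ∧ s < t₀ := by
    intro d hd
    obtain ⟨s, hs1, hs2⟩ := (hBσ.and_eventually (Ioo_mem_nhdsLT hd)).exists
    exact ⟨s, hs1, hs2.1, hs2.2⟩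
  have hstep : ∀ (d : {d : ℝ // d < t₀}) (m : ℕ),
      ∃ s : {d : ℝ // d < t₀}, s.1 ∈ B σ ∧ d.1 < s.1 ∧ t₀ - 1/(m+1) < s.1 := by
    intro d m
    have h1 : (0:ℝ) < 1/(m+1) := by positivity
    have hmax : max d.1 (t₀ - 1/(m+1)) < t₀ := max_lt d.2 (by linarith)
    obtain ⟨s, hs, hds, hst⟩ := hpick _ hmax
    exact ⟨⟨s, hst⟩, hs, lt_of_le_of_lt (le_max_left _ _) hds,
      lt_of_le_of_lt (le_max_right _ _) hds⟩
  choose f hf1 hf2 hf3 using hstep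
  set seq : ℕ → {d : ℝ // d < t₀} :=
    fun m => Nat.rec (f ⟨t₀ - 1, by linarith⟩ 0) (fun m s => f s (m+1)) m with hseq
  have hseqsucc : ∀ m, seq (m+1) = f (seq m) (m+1) := fun m => rfl
  set tm : ℕ → ℝ := fun m => (seq m).1 with htm
  have htmB : ∀ m, tm m ∈ B σ := by
    intro m
    cases m with
    | zero => exact hf1 _ 0
    | succ m => exact hf1 _ (m+1)
  have htmmono : StrictMono tm := by
    apply strictMono_nat_of_lt_succ
    intro m
    exact hf2 (seq m) (m+1)
  have htmlb : ∀ m, t₀ - 1/(m+1) < tm m := by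
    intro m
    cases m with
    | zero => exact hf3 _ 0
    | succ m => exact hf3 _ (m+1)
  have htmlt : ∀ m, tm m < t₀ := fun m => (seq m).2
  have htmtends : Tendsto tm atTop (𝓝 t₀) := by
    have h1 : Tendsto (fun m : ℕ => t₀ - 1/(m+1)) atTop (𝓝 t₀) := by
      have := tendsto_one_div_add_atTop_nhds_zero_nat (𝕜 := ℝ)
      have h2 := tendsto_const_nhds (x := t₀) (f := atTop (α := ℕ)) |>.sub this
      simpa using h2
    exact tendsto_of_tendsto_of_tendsto_of_le_of_le h1 tendsto_const_nhds
      (fun m => le_of_lt (htmlb m)) (fun m => le_of_lt (htmlt m))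
  have htmE : ∀ m, tm m ∈ E σ := fun m => hAE _ (hBA _ (htmB m))
  have htmW : ∀ m, tm m ∈ W := fun m => hEW _ (htmE m)
  have htmtendsL : Tendsto tm atTop (𝓝[<] t₀) := by
    rw [tendsto_nhdsWithin_iff]
    exact ⟨htmtends, Filter.Eventually.of_forall (fun m => htmlt m)⟩
  -- first-order limit
  have hphi1 : ∀ i, Tendsto (fun s => (y (σ i) s - x i s)/(s - t₀)) (𝓝[<] t₀) (𝓝 0) := by
    intro i
    apply branch_tendsto_zero (ι := Fin n) hαlt
      (h := fun j s => (x j s - x i s)/(s - t₀))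
    · intro t ht
      exact (((hydiff (σ i) t (hWI t ht)).continuousAt.sub
        (hxdiff i t (hWV t ht)).continuousAt).div
        (continuousAt_id.sub continuousAt_const)
        (sub_ne_zero.2 (ne_of_lt ht.2))).continuousWithinAt
    · intro t ht
      have hmem : y (σ i) t ∈ Multiset.map (fun j => x j t) Finset.univ.val := by
        rw [← hroots t ht]
        exact Multiset.mem_map_of_mem _ (by simp)
      obtain ⟨j, _, hj⟩ := Multiset.mem_map.1 hmem
      exact ⟨j, by rw [hj]⟩
    · intro j
      by_cases hc : x j t₀ = x i t₀
      · right
        refine ⟨deriv (x j) t₀ - deriv (x i) t₀, ?_⟩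
        have hd : HasDerivAt (fun s => x j s - x i s) (deriv (x j) t₀ - deriv (x i) t₀) t₀ :=
          ((hxdiff j t₀ ht₀V).hasDerivAt.sub (hxdiff i t₀ ht₀V).hasDerivAt)
        have hsl := hasDerivAt_iff_tendsto_slope.1 hd
        have hsl2 := hsl.mono_left (nhdsWithin_mono _ (fun u (hu : u < t₀) => ne_of_lt hu))
        apply hsl2.congr'
        filter_upwards [self_mem_nhdsWithin] with s _
        rw [slope_def_field, hc]
        ring
      · left
        have hnum : Tendsto (fun s => |x j s - x i s|) (𝓝[<] t₀) (𝓝 |x j t₀ - x i t₀|) :=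
          (((hxdiff j t₀ ht₀V).continuousAt.sub
            (hxdiff i t₀ ht₀V).continuousAt).abs.tendsto).mono_left nhdsWithin_le_nhds
        have hden : Tendsto (fun s => |s - t₀|⁻¹) (𝓝[<] t₀) atTop := by
          apply tendsto_inv_nhdsGT_zero.comp
          rw [tendsto_nhdsWithin_iff]
          constructor
          · have h5 : Tendsto (fun s : ℝ => |s - t₀|) (𝓝 t₀) (𝓝 |t₀ - t₀|) :=
              ((continuous_id.sub continuous_const).abs.tendsto t₀)
            simpa using h5.mono_left nhdsWithin_le_nhds
          · filter_upwards [self_mem_nhdsWithin] with s (hs : s < t₀)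
            exact abs_pos.2 (sub_ne_zero.2 (ne_of_lt hs))
        have hpos : 0 < |x j t₀ - x i t₀| := abs_pos.2 (sub_ne_zero.2 hc)
        have h6 := hnum.pos_mul_atTop hpos hden
        apply h6.congr
        intro s
        rw [abs_div, div_eq_mul_inv]
    · apply htmtendsL.frequently
      apply Filter.Frequently.of_forall
      intro m
      rw [(htmE m).2 i, sub_self, zero_div]
  -- second-order limit
  have hphi2 : ∀ i, Tendsto (fun s => (deriv (y (σ i)) s - deriv (x i) s)/(s - t₀))
      (𝓝[<] t₀) (𝓝 0) := by
    intro i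
    apply branch_tendsto_zero (ι := Fin n) hαlt
      (h := fun j s => (deriv (x j) s - deriv (x i) s)/(s - t₀))
    · intro t ht
      exact (((hydiff2 (σ i) t (hWI t ht)).continuousAt.sub
        (hxdiff2 i t (hWV t ht)).continuousAt).div
        (continuousAt_id.sub continuousAt_const)
        (sub_ne_zero.2 (ne_of_lt ht.2))).continuousWithinAt
    · intro t ht
      obtain ⟨j, _, hjd⟩ := exists_deriv_eq_aux y x t
        (Filter.eventually_of_mem (hWopen.mem_nhds ht) (fun s hs => hroots s hs))
        (fun j => hydiff j t (hWI t ht)) (fun j => hxdiff j t (hWV t ht)) (σ i)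
      exact ⟨j, by rw [hjd]⟩
    · intro j
      by_cases hc : deriv (x j) t₀ = deriv (x i) t₀
      · right
        refine ⟨deriv (deriv (x j)) t₀ - deriv (deriv (x i)) t₀, ?_⟩
        have hd : HasDerivAt (fun s => deriv (x j) s - deriv (x i) s)
            (deriv (deriv (x j)) t₀ - deriv (deriv (x i)) t₀) t₀ :=
          ((hxdiff2 j t₀ ht₀V).hasDerivAt.sub (hxdiff2 i t₀ ht₀V).hasDerivAt)
        have hsl := hasDerivAt_iff_tendsto_slope.1 hd
        have hsl2 := hsl.mono_left (nhdsWithin_mono _ (fun u (hu : u < t₀) => ne_of_lt hu))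
        apply hsl2.congr'
        filter_upwards [self_mem_nhdsWithin] with s _
        rw [slope_def_field, hc]
        ring
      · left
        have hnum : Tendsto (fun s => |deriv (x j) s - deriv (x i) s|) (𝓝[<] t₀)
            (𝓝 |deriv (x j) t₀ - deriv (x i) t₀|) :=
          (((hxdiff2 j t₀ ht₀V).continuousAt.sub
            (hxdiff2 i t₀ ht₀V).continuousAt).abs.tendsto).mono_left nhdsWithin_le_nhds
        have hden : Tendsto (fun s => |s - t₀|⁻¹) (𝓝[<] t₀) atTop := by
          apply tendsto_inv_nhdsGT_zero.comp
          rw [tendsto_nhdsWithin_iff]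
          constructor
          · have h5 : Tendsto (fun s : ℝ => |s - t₀|) (𝓝 t₀) (𝓝 |t₀ - t₀|) :=
              ((continuous_id.sub continuous_const).abs.tendsto t₀)
            simpa using h5.mono_left nhdsWithin_le_nhds
          · filter_upwards [self_mem_nhdsWithin] with s (hs : s < t₀)
            exact abs_pos.2 (sub_ne_zero.2 (ne_of_lt hs))
        have hpos : 0 < |deriv (x j) t₀ - deriv (x i) t₀| := abs_pos.2 (sub_ne_zero.2 hc)
        have h6 := hnum.pos_mul_atTop hpos hden
        apply h6.congr
        intro s
        rw [abs_div, div_eq_mul_inv]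
    · apply htmtendsL.frequently
      apply Filter.Frequently.of_forall
      intro m
      rw [hmatch1 _ (hBA _ (htmB m)) i, sub_self, zero_div]
  -- the pasted functions
  have hz_left_eq : ∀ i : Fin n, ∀ s, s < t₀ →
      (if s < t₀ then y (σ i) s else x i s) = y (σ i) s := fun i s hs => if_pos hs
  have hz_right_eq : ∀ i : Fin n, ∀ s, t₀ ≤ s →
      (if s < t₀ then y (σ i) s else x i s) = x i s := fun i s hs => if_neg (not_lt.2 hs)
  have hzderiv_left : ∀ i : Fin n, ∀ s, s < t₀ →
      deriv (fun u => if u < t₀ then y (σ i) u else x i u) s = deriv (y (σ i)) s := by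
    intro i s hs
    apply Filter.EventuallyEq.deriv_eq
    filter_upwards [isOpen_Iio.mem_nhds hs] with u hu
    exact hz_left_eq i u hu
  have hzderiv_right : ∀ i : Fin n, ∀ s, t₀ < s →
      deriv (fun u => if u < t₀ then y (σ i) u else x i u) s = deriv (x i) s := by
    intro i s hs
    apply Filter.EventuallyEq.deriv_eq
    filter_upwards [isOpen_Ioi.mem_nhds hs] with u hu
    exact hz_right_eq i u (le_of_lt hu)
  have hzt₀ : ∀ i : Fin n,
      HasDerivAt (fun u => if u < t₀ then y (σ i) u else x i u) (deriv (x i) t₀) t₀ := by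
    intro i
    rw [hasDerivAt_iff_tendsto_slope, ← nhdsLT_sup_nhdsGT, tendsto_sup]
    have hxslope := hasDerivAt_iff_tendsto_slope.1 (hxdiff i t₀ ht₀V).hasDerivAt
    constructor
    · have hxleft := hxslope.mono_left (nhdsWithin_mono _ (fun u (hu : u < t₀) => ne_of_lt hu))
      have hcomb := (hphi1 i).add hxleft
      rw [zero_add] at hcomb
      apply hcomb.congr'
      filter_upwards [self_mem_nhdsWithin] with s (hs : s < t₀)
      rw [slope_def_field, slope_def_field, hz_left_eq i s hs, hz_right_eq i t₀ le_rfl]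
      ring
    · have hxright := hxslope.mono_left (nhdsWithin_mono _ (fun u (hu : t₀ < u) => ne_of_gt hu))
      apply hxright.congr'
      filter_upwards [self_mem_nhdsWithin] with s (hs : t₀ < s)
      rw [slope_def_field, slope_def_field, hz_right_eq i s (le_of_lt hs),
        hz_right_eq i t₀ le_rfl]
  have hzderiv_t₀ : ∀ i : Fin n,
      deriv (fun u => if u < t₀ then y (σ i) u else x i u) t₀ = deriv (x i) t₀ :=
    fun i => (hzt₀ i).deriv
  have hz2t₀ : ∀ i : Fin n,
      HasDerivAt (deriv (fun u => if u < t₀ then y (σ i) u else x i u))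
        (deriv (deriv (x i)) t₀) t₀ := by
    intro i
    rw [hasDerivAt_iff_tendsto_slope, ← nhdsLT_sup_nhdsGT, tendsto_sup]
    have hxslope := hasDerivAt_iff_tendsto_slope.1 (hxdiff2 i t₀ ht₀V).hasDerivAt
    constructor
    · have hxleft := hxslope.mono_left (nhdsWithin_mono _ (fun u (hu : u < t₀) => ne_of_lt hu))
      have hcomb := (hphi2 i).add hxleft
      rw [zero_add] at hcomb
      apply hcomb.congr'
      filter_upwards [self_mem_nhdsWithin] with s (hs : s < t₀)
      rw [slope_def_field, slope_def_field, hzderiv_left i s hs, hzderiv_t₀ i]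
      ring
    · have hxright := hxslope.mono_left (nhdsWithin_mono _ (fun u (hu : t₀ < u) => ne_of_gt hu))
      apply hxright.congr'
      filter_upwards [self_mem_nhdsWithin] with s (hs : t₀ < s)
      rw [slope_def_field, slope_def_field, hzderiv_right i s hs, hzderiv_t₀ i]
  -- assemble
  refine ⟨σ, tm, fun m => hWI _ (htmW m), htmmono, htmtends,
    fun i m => ⟨(htmE m).2 i, hmatch1 _ (hBA _ (htmB m)) i, hmatch2 _ (htmB m) i⟩,
    (I ∩ Set.Iio t₀) ∪ Set.Ioo (t₀ - r) (t₀ + r), ?_, ?_, ?_, ?_, ?_, ?_⟩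
  · exact (hIopen.inter isOpen_Iio).union isOpen_Ioo
  · constructor
    intro p hp q hq c hc
    have hpI : p ∈ I := hp.elim (fun h => h.1) (fun h => (hball h).1)
    have hqI : q ∈ I := hq.elim (fun h => h.1) (fun h => (hball h).1)
    have hcI : c ∈ I := hIconn.out hpI hqI hc
    by_cases hct : c < t₀
    · exact Or.inl ⟨hcI, hct⟩
    · push_neg at hct
      right
      have hqIoo : q ∈ Set.Ioo (t₀ - r) (t₀ + r) := by
        rcases hq with hq | hq
        · exact absurd (lt_of_le_of_lt (hct.trans hc.2) hq.2) (lt_irrefl _)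
        · exact hq
      exact ⟨by linarith [hc.1, hc.2, hqIoo.1, hqIoo.2], lt_of_le_of_lt hc.2 hqIoo.2⟩
  · intro t ht
    by_cases hlt : t < t₀
    · exact Or.inl ⟨ht.1, hlt⟩
    · have : t = t₀ := le_antisymm ht.2 (not_lt.1 hlt)
      exact Or.inr ⟨by rw [this]; linarith, by rw [this]; linarith⟩
  · intro t htJ
    by_cases hlt : t < t₀
    · have htIW : t ∈ I ∩ Set.Iio t₀ := htJ.elim id (fun h => ⟨(hball h).1, hlt⟩)
      rw [hy t htIW]
      rw [Multiset.map_congr rfl (fun i _ => (hz_left_eq i t hlt : _))]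
      exact (map_perm_univ σ (fun j => y j t)).symm
    · have htIoo : t ∈ Set.Ioo (t₀ - r) (t₀ + r) := htJ.elim
        (fun h => absurd h.2 hlt) id
      rw [hx t (hball htIoo).2]
      rw [Multiset.map_congr rfl (fun i _ => (hz_right_eq i t (not_lt.1 hlt) : _))]
  · intro i t htJ
    rcases lt_trichotomy t t₀ with hlt | heq | hgt
    · have htIW : t ∈ I ∩ Set.Iio t₀ := htJ.elim id (fun h => ⟨(hball h).1, hlt⟩)
      have hev : (fun s => if s < t₀ then y (σ i) s else x i s) =ᶠ[𝓝 t] y (σ i) := by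
        filter_upwards [isOpen_Iio.mem_nhds hlt] with u hu
        exact hz_left_eq i u hu
      exact hev.differentiableAt_iff.2 (hydiff (σ i) t htIW)
    · rw [heq]
      exact (hzt₀ i).differentiableAt
    · have htIoo : t ∈ Set.Ioo (t₀ - r) (t₀ + r) := htJ.elim
        (fun h => absurd h.2 (not_lt.2 (le_of_lt hgt))) id
      have hev : (fun s => if s < t₀ then y (σ i) s else x i s) =ᶠ[𝓝 t] x i := by
        filter_upwards [isOpen_Ioi.mem_nhds hgt] with u hu
        exact hz_right_eq i u (le_of_lt hu)
      exact hev.differentiableAt_iff.2 (hxdiff i t (hball htIoo).2)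
  · intro i t htJ
    rcases lt_trichotomy t t₀ with hlt | heq | hgt
    · have htIW : t ∈ I ∩ Set.Iio t₀ := htJ.elim id (fun h => ⟨(hball h).1, hlt⟩)
      have hev : deriv (fun s => if s < t₀ then y (σ i) s else x i s)
          =ᶠ[𝓝 t] deriv (y (σ i)) := by
        filter_upwards [isOpen_Iio.mem_nhds hlt] with u hu
        exact hzderiv_left i u hu
      exact hev.differentiableAt_iff.2 (hydiff2 (σ i) t htIW)
    · rw [heq]
      exact (hz2t₀ i).differentiableAt
    · have htIoo : t ∈ Set.Ioo (t₀ - r) (t₀ + r) := htJ.elim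
        (fun h => absurd h.2 (not_lt.2 (le_of_lt hgt))) id
      have hev : deriv (fun s => if s < t₀ then y (σ i) s else x i s)
          =ᶠ[𝓝 t] deriv (x i) := by
        filter_upwards [isOpen_Ioi.mem_nhds hgt] with u hu
        exact hzderiv_right i u hu
      exact hev.differentiableAt_iff.2 (hxdiff2 i t (hball htIoo).2)
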